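/- Let M be an imprimitivity Hilbert C*-bimodule over commutative unital C*-algebras A and B, let wⱼ,zⱼ ∈ M with Σⱼ⟨wⱼ,zⱼ⟩_B = 1_B, and set α := Σⱼ⟨zⱼ,wⱼ⟩_A. Then α is a positive Hermitian element of A, ‖α‖ ≤ 1, and α is invertible with positive inverse of norm at most 1; consequently α = 1_A. -/

import Mathlib

/-- A pre-Hilbert C*-bimodule `M` over unital C*-algebras `A` (on the left) and
`B` (on the right): a left pre-Hilbert C*-module over `A` (inner product `innerL`,
`A`-linear in the first variable) and a right pre-Hilbert C*-module over `B`
(inner product `innerR`, `B`-linear in the second variable), with compatible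
actions. -/
structure PreHilbertBimodule (A B M : Type*) [CStarAlgebra A] [CStarAlgebra B]
    [AddCommGroup M] [Module ℂ M] where
  lsmul : A → M → M
  rsmul : M → B → M
  innerL : M → M → A
  innerR : M → M → B
  lsmul_dist : ∀ a x y, lsmul a (x + y) = lsmul a x + lsmul a y
  add_lsmul : ∀ a b x, lsmul (a + b) x = lsmul a x + lsmul b x
  mul_lsmul : ∀ a b x, lsmul (a * b) x = lsmul a (lsmul b x)
  one_lsmul : ∀ x, lsmul 1 x = x
  lsmul_csmul : ∀ (c : ℂ) a x, lsmul a (c • x) = c • lsmul a x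
  csmul_lsmul : ∀ (c : ℂ) a x, lsmul (c • a) x = c • lsmul a x
  rsmul_dist : ∀ x y b, rsmul (x + y) b = rsmul x b + rsmul y b
  rsmul_add : ∀ x a b, rsmul x (a + b) = rsmul x a + rsmul x b
  rsmul_mul : ∀ x a b, rsmul (rsmul x a) b = rsmul x (a * b)
  rsmul_one : ∀ x, rsmul x 1 = x
  rsmul_csmul : ∀ (c : ℂ) x b, rsmul (c • x) b = c • rsmul x b
  rsmul_calg : ∀ (c : ℂ) x b, rsmul x (c • b) = c • rsmul x b
  lsmul_rsmul : ∀ a x b, lsmul a (rsmul x b) = rsmul (lsmul a x) b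
  innerR_add_right : ∀ x y z, innerR x (y + z) = innerR x y + innerR x z
  innerR_rsmul_right : ∀ x y b, innerR x (rsmul y b) = innerR x y * b
  innerR_conj_symm : ∀ x y, innerR y x = star (innerR x y)
  innerR_csmul_right : ∀ (c : ℂ) x y, innerR x (c • y) = c • innerR x y
  innerR_self_pos : ∀ x, ∃ b, innerR x x = star b * b
  innerR_self_definite : ∀ x, innerR x x = 0 → x = 0
  innerL_add_left : ∀ x y z, innerL (x + y) z = innerL x z + innerL y z
  innerL_lsmul_left : ∀ a x y, innerL (lsmul a x) y = a * innerL x y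
  innerL_conj_symm : ∀ x y, innerL y x = star (innerL x y)
  innerL_csmul_left : ∀ (c : ℂ) x y, innerL (c • x) y = c • innerL x y
  innerL_self_pos : ∀ x, ∃ a, innerL x x = star a * a
  innerL_self_definite : ∀ x, innerL x x = 0 → x = 0
  innerR_lsmul : ∀ a x y, innerR x (lsmul a y) = innerR (lsmul (star a) x) y
  innerL_rsmul : ∀ x y b, innerL (rsmul x b) y = innerL x (rsmul y (star b))

/-- An imprimitivity (equivalence) Hilbert C*-bimodule over `A` and `B`: a
pre-Hilbert C*-bimodule that is full as a left and as a right Hilbert C*-module,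
satisfies the imprimitivity condition `⟨x,y⟩_A·z = x·⟨y,z⟩_B`, and is complete
(for the common norm induced by the inner products). -/
structure ImprimitivityBimodule (A B M : Type*) [CStarAlgebra A] [CStarAlgebra B]
    [AddCommGroup M] [Module ℂ M] extends PreHilbertBimodule A B M where
  imprimitivity : ∀ x y z, lsmul (innerL x y) z = rsmul x (innerR y z)
  fullL : closure (Submodule.span ℂ {a : A | ∃ x y : M, a = innerL x y} : Set A)
      = Set.univ
  fullR : closure (Submodule.span ℂ {b : B | ∃ x y : M, b = innerR x y} : Set B)
      = Set.univ
  complete : ∀ f : ℕ → M,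
    (∀ ε > 0, ∃ N, ∀ m ≥ N, ∀ n ≥ N,
      ‖innerR (f m - f n) (f m - f n)‖ < ε) →
    ∃ x, ∀ ε > 0, ∃ N, ∀ n ≥ N, ‖innerR (f n - x) (f n - x)‖ < ε


namespace ImprimitivityBimodule

variable {A B M : Type*} [CStarAlgebra A] [CStarAlgebra B]
    [AddCommGroup M] [Module ℂ M]

lemma lsmul_zero_left (H : ImprimitivityBimodule A B M) (x : M) :
    H.lsmul 0 x = 0 := by
  have h : H.lsmul 0 x + 0 = H.lsmul 0 x + H.lsmul 0 x := by
    rw [add_zero, ← H.add_lsmul, add_zero]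
  exact (add_left_cancel h).symm

lemma innerR_zero_right (H : ImprimitivityBimodule A B M) (x : M) :
    H.innerR x 0 = 0 := by
  have h : H.innerR x 0 + 0 = H.innerR x 0 + H.innerR x 0 := by
    rw [add_zero, ← H.innerR_add_right, add_zero]
  exact (add_left_cancel h).symm

lemma lsmul_sum (H : ImprimitivityBimodule A B M) {ι : Type*} (s : Finset ι)
    (f : ι → A) (x : M) :
    H.lsmul (∑ i ∈ s, f i) x = ∑ i ∈ s, H.lsmul (f i) x := by
  classical
  induction s using Finset.induction_on with
  | empty => simpa using H.lsmul_zero_left x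
  | insert _ _ h ih => rw [Finset.sum_insert h, Finset.sum_insert h, H.add_lsmul, ih]

lemma innerR_sum_right (H : ImprimitivityBimodule A B M) {ι : Type*} (s : Finset ι)
    (f : ι → M) (x : M) :
    H.innerR x (∑ i ∈ s, f i) = ∑ i ∈ s, H.innerR x (f i) := by
  classical
  induction s using Finset.induction_on with
  | empty => simpa using H.innerR_zero_right x
  | insert _ _ h ih => rw [Finset.sum_insert h, Finset.sum_insert h, H.innerR_add_right, ih]

lemma innerR_sub_right (H : ImprimitivityBimodule A B M) (x a b : M) :
    H.innerR x (a - b) = H.innerR x a - H.innerR x b := by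
  rw [eq_sub_iff_add_eq, ← H.innerR_add_right, sub_add_cancel]

/-- The six-variable identity coming from commutativity of `A`. -/
lemma key {A : Type*} [CommCStarAlgebra A] (H : ImprimitivityBimodule A B M)
    (t u y w z v : M) :
    H.innerR t u * (H.innerR y w * H.innerR z v)
      = H.innerR t w * (H.innerR z u * H.innerR y v) := by
  have h1 : H.lsmul (H.innerL u y * H.innerL w z) v
      = H.rsmul u (H.innerR y w * H.innerR z v) := by
    rw [H.mul_lsmul, H.imprimitivity w z v, H.lsmul_rsmul, H.imprimitivity, H.rsmul_mul]
  have h2 : H.lsmul (H.innerL w z * H.innerL u y) v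
      = H.rsmul w (H.innerR z u * H.innerR y v) := by
    rw [H.mul_lsmul, H.imprimitivity u y v, H.lsmul_rsmul, H.imprimitivity, H.rsmul_mul]
  have h3 : H.rsmul u (H.innerR y w * H.innerR z v)
      = H.rsmul w (H.innerR z u * H.innerR y v) := by
    rw [← h1, ← h2, mul_comm]
  calc H.innerR t u * (H.innerR y w * H.innerR z v)
      = H.innerR t (H.rsmul u (H.innerR y w * H.innerR z v)) :=
        (H.innerR_rsmul_right _ _ _).symm
    _ = H.innerR t (H.rsmul w (H.innerR z u * H.innerR y v)) := by rw [h3]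
    _ = H.innerR t w * (H.innerR z u * H.innerR y v) := H.innerR_rsmul_right _ _ _

end ImprimitivityBimodule


/-- For an imprimitivity Hilbert C*-bimodule `M` over commutative unital C*-algebras
`A` and `B`, and finite families `wⱼ, zⱼ ∈ M` with `Σⱼ⟨wⱼ,zⱼ⟩_B = 1_B`, the element
`α := Σⱼ⟨zⱼ,wⱼ⟩_A` is Hermitian, positive, of norm at most `1`, invertible with a
positive inverse of norm at most `1`; consequently `α = 1_A`. -/
theorem canonical_element_eq_one
    {A B M : Type*} [CommCStarAlgebra A] [CommCStarAlgebra B]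
    [AddCommGroup M] [Module ℂ M]
    (H : ImprimitivityBimodule A B M)
    {n : ℕ} (w z : Fin n → M)
    (hwz : (∑ j, H.innerR (w j) (z j)) = 1)
    (α : A) (hα : α = ∑ j, H.innerL (z j) (w j)) :
    IsSelfAdjoint α ∧
    (∃ c : A, α = star c * c) ∧
    ‖α‖ ≤ 1 ∧
    (∃ γ : A, α * γ = 1 ∧ γ * α = 1 ∧ (∃ d : A, γ = star d * d) ∧ ‖γ‖ ≤ 1) ∧
    α = 1 := by
  classical
  -- Step 1: the fundamental identity `⟨t,u⟩⟨zz,v⟩ = ⟨zz,u⟩⟨t, α·v⟩`.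
  have hL3 : ∀ t v : M, H.innerR t (H.lsmul α v)
      = ∑ j, H.innerR t (z j) * H.innerR (w j) v := by
    intro t v
    rw [hα, H.lsmul_sum, H.innerR_sum_right]
    exact Finset.sum_congr rfl fun j _ => by
      rw [H.imprimitivity, H.innerR_rsmul_right]
  have hstar3 : ∀ t u zz v : M,
      H.innerR t u * H.innerR zz v = H.innerR zz u * H.innerR t (H.lsmul α v) := by
    intro t u zz v
    have e1 : ∑ j, H.innerR t u * (H.innerR (w j) (z j) * H.innerR zz v)
        = H.innerR t u * H.innerR zz v := by
      rw [← Finset.mul_sum, ← Finset.sum_mul, hwz, one_mul]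
    calc H.innerR t u * H.innerR zz v
        = ∑ j, H.innerR t u * (H.innerR (w j) (z j) * H.innerR zz v) := e1.symm
      _ = ∑ j, H.innerR zz u * (H.innerR t (z j) * H.innerR (w j) v) :=
          Finset.sum_congr rfl fun j _ => by
            rw [H.key t u (w j) (z j) zz v]; ring
      _ = H.innerR zz u * ∑ j, H.innerR t (z j) * H.innerR (w j) v := by
          rw [Finset.mul_sum]
      _ = H.innerR zz u * H.innerR t (H.lsmul α v) := by rw [hL3]
  -- Step 2: `α` acts as the identity on `M`.
  have hfix : ∀ v : M, H.lsmul α v = v := by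
    intro v
    set x : M := H.lsmul α v - v with hx
    have h0 : ∀ t u2 : M, H.innerR t u2 * H.innerR t x = 0 := by
      intro t u2
      have hsub : H.innerR t x = H.innerR t (H.lsmul α v) - H.innerR t v :=
        H.innerR_sub_right _ _ _
      have h := hstar3 t u2 t v
      rw [hsub, mul_sub, ← h, sub_self]
    have hbb : H.innerR x x * H.innerR x x = 0 := h0 x x
    have hb0 : H.innerR x x = 0 := by
      obtain ⟨b, hb⟩ := H.innerR_self_pos x
      have hsa : star (H.innerR x x) = H.innerR x x := by
        rw [hb, star_mul, star_star]
      have hnorm : ‖H.innerR x x‖ * ‖H.innerR x x‖ = 0 := by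
        rw [← CStarRing.norm_star_mul_self, hsa, hbb, norm_zero]
      exact norm_eq_zero.mp (mul_self_eq_zero.mp hnorm)
    have hx0 := H.innerR_self_definite x hb0
    rw [hx] at hx0
    exact sub_eq_zero.mp hx0
  -- Step 3: `α * a = a` for every `a`, by fullness.
  have hmul : ∀ a : A, α * a = a := by
    let T : Submodule ℂ A :=
      { carrier := {a : A | α * a = a}
        add_mem' := by
          intro a b ha hb
          simp only [Set.mem_setOf_eq] at *
          rw [mul_add, ha, hb]
        zero_mem' := by simp
        smul_mem' := by
          intro c a ha
          simp only [Set.mem_setOf_eq] at *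
          rw [mul_smul_comm, ha] }
    have hspan : Submodule.span ℂ {a : A | ∃ x y : M, a = H.innerL x y} ≤ T := by
      rw [Submodule.span_le]
      rintro a ⟨x, y, rfl⟩
      show α * H.innerL x y = H.innerL x y
      rw [← H.innerL_lsmul_left, hfix]
    have hclosed : IsClosed (T : Set A) :=
      isClosed_eq (continuous_const.mul continuous_id) continuous_id
    have hsub : closure (Submodule.span ℂ {a : A | ∃ x y : M, a = H.innerL x y} : Set A)
        ⊆ (T : Set A) := closure_minimal hspan hclosed
    intro a
    exact hsub (by rw [H.fullL]; trivial)
  have hone : α = 1 := by simpa using hmul 1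
  have hn1 : ‖(1 : A)‖ ≤ 1 := by
    rcases subsingleton_or_nontrivial A with h | h
    · simp [Subsingleton.elim (1 : A) 0]
    · exact le_of_eq norm_one
  subst hone
  exact ⟨(IsSelfAdjoint.one A), ⟨1, by simp⟩, hn1,
    ⟨1, one_mul 1, one_mul 1, ⟨1, by simp⟩, hn1⟩, rfl⟩
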